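/- The estimate max{|Z^{(n)}(x)|, |Z̃^{(n)}(x)|} ≤ c c_1 · 2^{n+1} n! Σ_{k=0}^n C(n,k) (c_1 c_2)^k c_3^{n-k} |x-x_0|^{n+k+1}/(n+k+1)! holds for all n ≥ 0 and x ∈ [a,b]. -/

import Mathlib

open Set intervalIntegral MeasureTheory

/-- The SPPS formal powers `(X⁽ⁿ⁾, Y⁽ⁿ⁾)` defined by the recursion
`X⁽ⁿ⁺¹⁾ = (n+1)∫ (-r₂₁ X⁽ⁿ⁾ - r₂₂ (g/f) Y⁽ⁿ⁾ + (p₂/f²) Z⁽ⁿ⁾)`,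
`Y⁽ⁿ⁺¹⁾ = (n+1)∫ (r₁₁ (f/g) X⁽ⁿ⁾ + r₁₂ Y⁽ⁿ⁾ + (p₁/g²) Z⁽ⁿ⁾)`, where
`Z⁽ⁿ⁾ = ∫ (X⁽ⁿ⁾(f²r₁₁+g²r₂₁) + Y⁽ⁿ⁾(f²r₁₂+g²r₂₂))`. -/
noncomputable def spps (p1 p2 r11 r12 r21 r22 f g : ℝ → ℂ) (x0 : ℝ) (X0 Y0 : ℝ → ℂ) :
    ℕ → (ℝ → ℂ) × (ℝ → ℂ)
  | 0 => (X0, Y0)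
  | n + 1 =>
    let X := (spps p1 p2 r11 r12 r21 r22 f g x0 X0 Y0 n).1
    let Y := (spps p1 p2 r11 r12 r21 r22 f g x0 X0 Y0 n).2
    let Z : ℝ → ℂ := fun x => ∫ s in x0..x,
      (X s * (f s ^ 2 * r11 s + g s ^ 2 * r21 s) + Y s * (f s ^ 2 * r12 s + g s ^ 2 * r22 s))
    (fun x => (n + 1 : ℂ) * ∫ s in x0..x,
        (-(r21 s) * X s - r22 s * (g s / f s) * Y s + p2 s / f s ^ 2 * Z s),
     fun x => (n + 1 : ℂ) * ∫ s in x0..x,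
        (r11 s * (f s / g s) * X s + r12 s * Y s + p1 s / g s ^ 2 * Z s))

/-- The SPPS formal power `Z⁽ⁿ⁾`. -/
noncomputable def sppsZ (p1 p2 r11 r12 r21 r22 f g : ℝ → ℂ) (x0 : ℝ) (X0 Y0 : ℝ → ℂ)
    (n : ℕ) : ℝ → ℂ := fun x => ∫ s in x0..x,
      ((spps p1 p2 r11 r12 r21 r22 f g x0 X0 Y0 n).1 s * (f s ^ 2 * r11 s + g s ^ 2 * r21 s)
        + (spps p1 p2 r11 r12 r21 r22 f g x0 X0 Y0 n).2 s * (f s ^ 2 * r12 s + g s ^ 2 * r22 s))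

/-- Initial formal power `X⁽⁰⁾(x) = f(x₀)g(x₀) ∫_{x₀}^x p₂/f²`. -/
noncomputable def sppsX0 (p2 f g : ℝ → ℂ) (x0 : ℝ) : ℝ → ℂ :=
  fun x => f x0 * g x0 * ∫ s in x0..x, p2 s / f s ^ 2

/-- Initial formal power `Y⁽⁰⁾(x) = 1 + f(x₀)g(x₀) ∫_{x₀}^x p₁/g²`. -/
noncomputable def sppsY0 (p1 f g : ℝ → ℂ) (x0 : ℝ) : ℝ → ℂ :=
  fun x => 1 + f x0 * g x0 * ∫ s in x0..x, p1 s / g s ^ 2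

/-- Initial formal power `X̃⁽⁰⁾(x) = 1 - f(x₀)g(x₀) ∫_{x₀}^x p₂/f²`. -/
noncomputable def sppsXt0 (p2 f g : ℝ → ℂ) (x0 : ℝ) : ℝ → ℂ :=
  fun x => 1 - f x0 * g x0 * ∫ s in x0..x, p2 s / f s ^ 2

/-- Initial formal power `Ỹ⁽⁰⁾(x) = -f(x₀)g(x₀) ∫_{x₀}^x p₁/g²`. -/
noncomputable def sppsYt0 (p1 f g : ℝ → ℂ) (x0 : ℝ) : ℝ → ℂ :=
  fun x => -(f x0 * g x0) * ∫ s in x0..x, p1 s / g s ^ 2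

/-- The max-norm (sup norm) of a function on `[a,b]`. -/
noncomputable def supNorm (a b : ℝ) (h : ℝ → ℂ) : ℝ :=
  sSup ((fun x => ‖h x‖) '' Icc a b)


-- ===== auxiliary development =====

lemma integral_abs_pow (m : ℕ) (y : ℝ) :
    ∫ u in (0:ℝ)..y, |u| ^ m = y * |y| ^ m / (m + 1) := by
  rcases le_or_gt 0 y with hy | hy
  · rw [intervalIntegral.integral_congr (g := fun u => u ^ m)
      (fun u hu => by rw [uIcc_of_le hy] at hu; simp [abs_of_nonneg hu.1]),
      integral_pow, abs_of_nonneg hy]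
    ring
  · rw [intervalIntegral.integral_congr (g := fun u => (-u) ^ m)
      (fun u hu => by rw [uIcc_of_ge hy.le] at hu; rw [abs_of_nonpos hu.2]),
      intervalIntegral.integral_comp_neg (fun u => u ^ m), neg_zero, integral_pow,
      abs_of_neg hy]
    ring

lemma integral_abs_pow' (m : ℕ) (x0 x : ℝ) :
    ∫ s in x0..x, |s - x0| ^ m = (x - x0) * |x - x0| ^ m / (m + 1) := by
  have := intervalIntegral.integral_comp_sub_right (a := x0) (b := x) (fun u => |u| ^ m) x0
  rw [this, sub_self, integral_abs_pow]

/-- coefficient of the `X/Y` estimate -/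
noncomputable def coA (c c1 c2 c3 : ℝ) (n k : ℕ) : ℝ :=
  c * 2^n * n.factorial * (n.choose k) * (c1*c2)^k * c3^(n-k) / (n+k).factorial

/-- coefficient of the `Z` estimate -/
noncomputable def coB (c c1 c2 c3 : ℝ) (n k : ℕ) : ℝ :=
  c * c1 * 2^(n+1) * n.factorial * (n.choose k) * (c1*c2)^k * c3^(n-k) / (n+k+1).factorial

noncomputable def sppsEn (c c1 c2 c3 x0 : ℝ) (n : ℕ) (x : ℝ) : ℝ :=
  ∑ k ∈ Finset.range (n+1), coA c c1 c2 c3 n k * |x - x0| ^ (n+k)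

noncomputable def sppsZB (c c1 c2 c3 x0 : ℝ) (n : ℕ) (x : ℝ) : ℝ :=
  ∑ k ∈ Finset.range (n+1), coB c c1 c2 c3 n k * |x - x0| ^ (n+k+1)

section algebra
variable {c c1 c2 c3 : ℝ}

lemma sppsEn_nonneg (hc : 0 ≤ c) (hc1 : 0 ≤ c1) (hc2 : 0 ≤ c2) (hc3 : 0 ≤ c3)
    (x0 : ℝ) (n : ℕ) (x : ℝ) : 0 ≤ sppsEn c c1 c2 c3 x0 n x :=
  Finset.sum_nonneg fun k _ =>
    mul_nonneg (by unfold coA; positivity) (by positivity)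

lemma sppsZB_nonneg (hc : 0 ≤ c) (hc1 : 0 ≤ c1) (hc2 : 0 ≤ c2) (hc3 : 0 ≤ c3)
    (x0 : ℝ) (n : ℕ) (x : ℝ) : 0 ≤ sppsZB c c1 c2 c3 x0 n x :=
  Finset.sum_nonneg fun k _ =>
    mul_nonneg (by unfold coB; positivity) (by positivity)

lemma sppsEn_continuous (x0 : ℝ) (n : ℕ) : Continuous (sppsEn c c1 c2 c3 x0 n) := by
  unfold sppsEn
  exact continuous_finset_sum _ fun k _ => by fun_prop

lemma sppsZB_continuous (x0 : ℝ) (n : ℕ) : Continuous (sppsZB c c1 c2 c3 x0 n) := by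
  unfold sppsZB
  exact continuous_finset_sum _ fun k _ => by fun_prop

lemma integral_coeff_abs_pow (x0 x : ℝ) (N : ℕ) (A : ℕ → ℝ) (m : ℕ → ℕ) :
    ∫ s in x0..x, ∑ k ∈ Finset.range N, A k * |s - x0| ^ (m k)
      = (x - x0) * ∑ k ∈ Finset.range N, A k * |x - x0| ^ (m k) / (m k + 1) := by
  rw [intervalIntegral.integral_finset_sum
    (fun k _ => Continuous.intervalIntegrable (by fun_prop) _ _), Finset.mul_sum]
  refine Finset.sum_congr rfl fun k _ => ?_
  rw [intervalIntegral.integral_const_mul, integral_abs_pow']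
  ring

lemma fact_succ_cast (m : ℕ) : ((m+1).factorial : ℝ) = ((m:ℝ)+1) * m.factorial := by
  push_cast [Nat.factorial_succ]; ring

lemma abs_integral_sppsEn (hc : 0 ≤ c) (hc1 : 0 ≤ c1) (hc2 : 0 ≤ c2) (hc3 : 0 ≤ c3)
    (x0 x : ℝ) (n : ℕ) :
    2 * c1 * |∫ s in x0..x, sppsEn c c1 c2 c3 x0 n s| = sppsZB c c1 c2 c3 x0 n x := by
  have hEn : ∀ s, sppsEn c c1 c2 c3 x0 n s
      = ∑ k ∈ Finset.range (n+1), coA c c1 c2 c3 n k * |s - x0| ^ (n+k) := fun _ => rfl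
  simp only [hEn]
  rw [integral_coeff_abs_pow x0 x (n+1) (coA c c1 c2 c3 n) (fun k => n + k)]
  have hS : 0 ≤ ∑ k ∈ Finset.range (n+1),
      coA c c1 c2 c3 n k * |x - x0| ^ (n+k) / (((n+k : ℕ) : ℝ) + 1) :=
    Finset.sum_nonneg fun k _ => div_nonneg
      (mul_nonneg (by unfold coA; positivity) (pow_nonneg (abs_nonneg _) _))
      (by positivity)
  rw [abs_mul, abs_of_nonneg hS, Finset.mul_sum, Finset.mul_sum, sppsZB]
  refine Finset.sum_congr rfl fun k _ => ?_
  unfold coA coB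
  have h1 : ((n+k+1).factorial : ℝ) = ((n:ℝ)+(k:ℝ)+1) * (n+k).factorial := by
    rw [fact_succ_cast (n+k)]; push_cast; ring
  have h2 : ((n+k).factorial : ℝ) ≠ 0 := Nat.cast_ne_zero.2 (Nat.factorial_ne_zero _)
  have h3 : ((n:ℝ)+(k:ℝ)+1) ≠ 0 := by positivity
  rw [h1, pow_succ (2:ℝ) n, pow_succ |x - x0| (n+k)]
  push_cast
  field_simp

lemma key_sum (n : ℕ) (F G1 G2 : ℕ → ℝ)
    (h0 : F 0 = G1 0)
    (hsucc : ∀ k ∈ Finset.range (n+1), F (k+1) = G1 (k+1) + G2 k)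
    (htop : G1 (n+1) = 0) :
    ∑ k ∈ Finset.range (n+2), F k
      = ∑ k ∈ Finset.range (n+1), G1 k + ∑ k ∈ Finset.range (n+1), G2 k := by
  calc ∑ k ∈ Finset.range (n+2), F k
      = ∑ k ∈ Finset.range (n+1), F (k+1) + F 0 := Finset.sum_range_succ' _ _
    _ = ∑ k ∈ Finset.range (n+1), (G1 (k+1) + G2 k) + G1 0 := by
        rw [Finset.sum_congr rfl hsucc, h0]
    _ = (∑ k ∈ Finset.range (n+1), G1 (k+1) + G1 0) + ∑ k ∈ Finset.range (n+1), G2 k := by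
        rw [Finset.sum_add_distrib]; ring
    _ = ∑ k ∈ Finset.range (n+2), G1 k + ∑ k ∈ Finset.range (n+1), G2 k := by
        rw [← Finset.sum_range_succ']
    _ = (∑ k ∈ Finset.range (n+1), G1 k + G1 (n+1)) + ∑ k ∈ Finset.range (n+1), G2 k := by
        rw [Finset.sum_range_succ]
    _ = _ := by rw [htop, add_zero]

lemma pascal_step (t : ℝ) (n : ℕ) :
    ∑ k ∈ Finset.range (n+2), coA c c1 c2 c3 (n+1) k * t^(n+1+k)
      = (∑ k ∈ Finset.range (n+1),
          ((n:ℝ)+1) * (2*c3) * coA c c1 c2 c3 n k * t^(n+k+1) / (((n+k:ℕ):ℝ)+1))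
      + ∑ k ∈ Finset.range (n+1),
          ((n:ℝ)+1) * c2 * coB c c1 c2 c3 n k * t^(n+k+2) / (((n+k+1:ℕ):ℝ)+1) := by
  refine key_sum n _ _ _ ?_ ?_ ?_
  · simp only [coA, Nat.choose_zero_right, Nat.sub_zero, Nat.add_zero, Nat.cast_one, pow_zero]
    rw [fact_succ_cast n, pow_succ (2:ℝ) n, pow_succ c3 n]
    have h2 : ((n.factorial : ℝ)) ≠ 0 := Nat.cast_ne_zero.2 (Nat.factorial_ne_zero _)
    have h3 : ((n:ℝ)+1) ≠ 0 := by positivity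
    push_cast
    field_simp
  · intro k hk
    have hkn : k ≤ n := Nat.lt_succ_iff.mp (Finset.mem_range.mp hk)
    have e1 : n + 1 + (k+1) = (n+k+1)+1 := by omega
    have e3 : n + 1 - (k+1) = n - k := by omega
    have hch : (((n+1).choose (k+1) : ℕ) : ℝ) = (n.choose k : ℝ) + (n.choose (k+1) : ℝ) := by
      rw [Nat.choose_succ_succ]; push_cast; ring
    rcases eq_or_lt_of_le hkn with heq | hlt
    · have hc0 : (n.choose (k+1)) = 0 := Nat.choose_eq_zero_of_lt (by omega)
      have h5 : n - k = 0 := by omega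
      simp only [coA, coB, hch, hc0, Nat.cast_zero, add_zero, e1, e3, h5, pow_zero,
        mul_zero, zero_mul, zero_div, zero_add, mul_one]
      rw [fact_succ_cast (n+k+1), fact_succ_cast n, pow_succ (2:ℝ) n, pow_succ (c1*c2) k]
      have h3 : ((n:ℝ)+(k:ℝ)+2) ≠ 0 := by positivity
      push_cast
      field_simp
    · have e4 : n - k = (n - (k+1)) + 1 := by omega
      simp only [coA, coB, hch, e1, e3]
      rw [fact_succ_cast (n+k+1), fact_succ_cast n, pow_succ (2:ℝ) n, pow_succ (c1*c2) k,
        e4, pow_succ c3 (n-(k+1))]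
      have h3 : ((n:ℝ)+(k:ℝ)+2) ≠ 0 := by positivity
      push_cast
      field_simp
      ring
  · simp [coA, Nat.choose_succ_self]

lemma step_integral_eq (hc : 0 ≤ c) (hc1 : 0 ≤ c1) (hc2 : 0 ≤ c2) (hc3 : 0 ≤ c3)
    (x0 x : ℝ) (n : ℕ) :
    ((n:ℝ) + 1) * |∫ s in x0..x,
        (2 * c3 * sppsEn c c1 c2 c3 x0 n s + c2 * sppsZB c c1 c2 c3 x0 n s)|
      = sppsEn c c1 c2 c3 x0 (n+1) x := by
  have i1 : ∫ s in x0..x, sppsEn c c1 c2 c3 x0 n s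
      = (x - x0) * ∑ k ∈ Finset.range (n+1),
          coA c c1 c2 c3 n k * |x - x0| ^ (n+k) / (((n+k:ℕ):ℝ)+1) :=
    integral_coeff_abs_pow x0 x (n+1) _ (fun k => n+k)
  have i2 : ∫ s in x0..x, sppsZB c c1 c2 c3 x0 n s
      = (x - x0) * ∑ k ∈ Finset.range (n+1),
          coB c c1 c2 c3 n k * |x - x0| ^ (n+k+1) / (((n+k+1:ℕ):ℝ)+1) :=
    integral_coeff_abs_pow x0 x (n+1) _ (fun k => n+k+1)
  rw [intervalIntegral.integral_add (f := fun s => 2 * c3 * sppsEn c c1 c2 c3 x0 n s)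
        (g := fun s => c2 * sppsZB c c1 c2 c3 x0 n s)
        ((continuous_const.mul (sppsEn_continuous x0 n)).intervalIntegrable _ _ :
          IntervalIntegrable (fun s => 2 * c3 * sppsEn c c1 c2 c3 x0 n s) volume x0 x)
        ((continuous_const.mul (sppsZB_continuous x0 n)).intervalIntegrable _ _ :
          IntervalIntegrable (fun s => c2 * sppsZB c c1 c2 c3 x0 n s) volume x0 x),
      intervalIntegral.integral_const_mul, intervalIntegral.integral_const_mul, i1, i2]
  have hS1 : 0 ≤ ∑ k ∈ Finset.range (n+1),
      coA c c1 c2 c3 n k * |x - x0| ^ (n+k) / (((n+k:ℕ):ℝ)+1) :=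
    Finset.sum_nonneg fun k _ => div_nonneg
      (mul_nonneg (by unfold coA; positivity) (pow_nonneg (abs_nonneg _) _)) (by positivity)
  have hS2 : 0 ≤ ∑ k ∈ Finset.range (n+1),
      coB c c1 c2 c3 n k * |x - x0| ^ (n+k+1) / (((n+k+1:ℕ):ℝ)+1) :=
    Finset.sum_nonneg fun k _ => div_nonneg
      (mul_nonneg (by unfold coB; positivity) (pow_nonneg (abs_nonneg _) _)) (by positivity)
  set S1 := ∑ k ∈ Finset.range (n+1),
      coA c c1 c2 c3 n k * |x - x0| ^ (n+k) / (((n+k:ℕ):ℝ)+1) with hS1d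
  set S2 := ∑ k ∈ Finset.range (n+1),
      coB c c1 c2 c3 n k * |x - x0| ^ (n+k+1) / (((n+k+1:ℕ):ℝ)+1) with hS2d
  rw [show 2 * c3 * ((x - x0) * S1) + c2 * ((x - x0) * S2)
      = (x - x0) * (2 * c3 * S1 + c2 * S2) by ring, abs_mul,
    abs_of_nonneg (add_nonneg (mul_nonneg (by positivity) hS1) (mul_nonneg hc2 hS2))]
  have expand : ((n:ℝ)+1) * (|x - x0| * (2*c3*S1 + c2*S2))
      = (∑ k ∈ Finset.range (n+1),
          ((n:ℝ)+1) * (2*c3) * coA c c1 c2 c3 n k * |x - x0|^(n+k+1) / (((n+k:ℕ):ℝ)+1))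
      + ∑ k ∈ Finset.range (n+1),
          ((n:ℝ)+1) * c2 * coB c c1 c2 c3 n k * |x - x0|^(n+k+2) / (((n+k+1:ℕ):ℝ)+1) := by
    rw [hS1d, hS2d]
    simp only [mul_add, Finset.mul_sum]
    congr 1 <;> exact Finset.sum_congr rfl fun k _ => by rw [pow_succ]; ring
  rw [expand, ← pascal_step |x - x0| n]
  rfl

end algebra

lemma norm_int_le {a b x0 x : ℝ} (hx0 : x0 ∈ Icc a b) (hx : x ∈ Icc a b)
    {F : ℝ → ℂ} {B : ℝ → ℝ} (hB : Continuous B)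
    (hbd : ∀ s ∈ Icc a b, ‖F s‖ ≤ B s) :
    ‖∫ s in x0..x, F s‖ ≤ |∫ s in x0..x, B s| := by
  apply intervalIntegral.norm_integral_le_abs_of_norm_le
  · filter_upwards [MeasureTheory.ae_restrict_mem measurableSet_uIoc] with s hs
    have hsI : s ∈ Icc a b := uIcc_subset_Icc hx0 hx (uIoc_subset_uIcc hs)
    exact hbd s hsI
  · exact hB.intervalIntegrable _ _

lemma abs_nat_succ (n : ℕ) : ‖(n:ℂ)+1‖ = (n:ℝ)+1 := by
  rw [show ((n:ℂ)+1) = ((n+1:ℕ):ℂ) by push_cast; ring, Complex.norm_natCast]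
  push_cast; ring

section main
variable {a b x0 : ℝ} {p1 p2 r11 r12 r21 r22 f g X0 Y0 : ℝ → ℂ} {c c1 c2 c3 : ℝ}

/-- the inductive bound on the formal powers X, Y -/
theorem spps_bound (hx0 : x0 ∈ Icc a b)
    (hc : 0 ≤ c) (hc1 : 0 ≤ c1) (hc2 : 0 ≤ c2) (hc3 : 0 ≤ c3)
    (hX0c : ∀ x ∈ Icc a b, ‖X0 x‖ ≤ c)
    (hY0c : ∀ x ∈ Icc a b, ‖Y0 x‖ ≤ c)
    (hb1 : ∀ x ∈ Icc a b, ‖f x ^ 2 * r11 x + g x ^ 2 * r21 x‖ ≤ c1)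
    (hb1' : ∀ x ∈ Icc a b, ‖f x ^ 2 * r12 x + g x ^ 2 * r22 x‖ ≤ c1)
    (hb2 : ∀ x ∈ Icc a b, ‖p2 x / f x ^ 2‖ ≤ c2)
    (hb2' : ∀ x ∈ Icc a b, ‖p1 x / g x ^ 2‖ ≤ c2)
    (hb3 : ∀ x ∈ Icc a b, ‖r21 x‖ ≤ c3)
    (hb3' : ∀ x ∈ Icc a b, ‖r22 x * (g x / f x)‖ ≤ c3)
    (hb3'' : ∀ x ∈ Icc a b, ‖r11 x * (f x / g x)‖ ≤ c3)
    (hb3''' : ∀ x ∈ Icc a b, ‖r12 x‖ ≤ c3) :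
    ∀ n, ∀ x ∈ Icc a b,
      ‖(spps p1 p2 r11 r12 r21 r22 f g x0 X0 Y0 n).1 x‖
          ≤ sppsEn c c1 c2 c3 x0 n x ∧
        ‖(spps p1 p2 r11 r12 r21 r22 f g x0 X0 Y0 n).2 x‖
          ≤ sppsEn c c1 c2 c3 x0 n x := by
  intro n
  induction n with
  | zero =>
    intro x hx
    have hEn0 : sppsEn c c1 c2 c3 x0 0 x = c := by
      simp [sppsEn, coA]
    rw [hEn0]
    exact ⟨hX0c x hx, hY0c x hx⟩
  | succ n ih =>
    set X := (spps p1 p2 r11 r12 r21 r22 f g x0 X0 Y0 n).1 with hX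
    set Y := (spps p1 p2 r11 r12 r21 r22 f g x0 X0 Y0 n).2 with hY
    set Z := sppsZ p1 p2 r11 r12 r21 r22 f g x0 X0 Y0 n with hZ
    have hZb : ∀ s ∈ Icc a b, ‖Z s‖ ≤ sppsZB c c1 c2 c3 x0 n s := by
      intro s hs
      have h1 : ‖∫ u in x0..s,
          (X u * (f u ^ 2 * r11 u + g u ^ 2 * r21 u)
            + Y u * (f u ^ 2 * r12 u + g u ^ 2 * r22 u))‖
          ≤ |∫ u in x0..s, 2 * c1 * sppsEn c c1 c2 c3 x0 n u| := by
        refine norm_int_le hx0 hs (by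
          exact continuous_const.mul (sppsEn_continuous x0 n)) ?_
        intro u hu
        calc ‖X u * (f u ^ 2 * r11 u + g u ^ 2 * r21 u)
              + Y u * (f u ^ 2 * r12 u + g u ^ 2 * r22 u)‖
            ≤ ‖X u‖ * ‖f u ^ 2 * r11 u + g u ^ 2 * r21 u‖
              + ‖Y u‖ * ‖f u ^ 2 * r12 u + g u ^ 2 * r22 u‖ := by
              refine le_trans (norm_add_le _ _) ?_
              rw [norm_mul, norm_mul]
          _ ≤ sppsEn c c1 c2 c3 x0 n u * c1 + sppsEn c c1 c2 c3 x0 n u * c1 := by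
              refine add_le_add ?_ ?_
              · exact mul_le_mul (ih u hu).1 (hb1 u hu) (norm_nonneg _)
                  (sppsEn_nonneg hc hc1 hc2 hc3 x0 n u)
              · exact mul_le_mul (ih u hu).2 (hb1' u hu) (norm_nonneg _)
                  (sppsEn_nonneg hc hc1 hc2 hc3 x0 n u)
          _ = 2 * c1 * sppsEn c c1 c2 c3 x0 n u := by ring
      calc ‖Z s‖ ≤ |∫ u in x0..s, 2 * c1 * sppsEn c c1 c2 c3 x0 n u| := h1
        _ = sppsZB c c1 c2 c3 x0 n s := by
            rw [intervalIntegral.integral_const_mul, abs_mul, abs_of_nonneg (by positivity)]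
            rw [← abs_integral_sppsEn hc hc1 hc2 hc3 x0 s n]
    have step : ∀ (A1 A2 P : ℝ → ℂ) (x : ℝ), x ∈ Icc a b →
        (∀ s ∈ Icc a b, ‖A1 s‖ ≤ c3) →
        (∀ s ∈ Icc a b, ‖A2 s‖ ≤ c3) →
        (∀ s ∈ Icc a b, ‖P s‖ ≤ c2) →
        ‖((n:ℂ) + 1) * ∫ s in x0..x, (A1 s * X s + A2 s * Y s + P s * Z s)‖
          ≤ sppsEn c c1 c2 c3 x0 (n+1) x := by
      intro A1 A2 P x hx hA1 hA2 hP
      rw [norm_mul, abs_nat_succ]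
      have h2 : ‖∫ s in x0..x, (A1 s * X s + A2 s * Y s + P s * Z s)‖
          ≤ |∫ s in x0..x,
              (2 * c3 * sppsEn c c1 c2 c3 x0 n s + c2 * sppsZB c c1 c2 c3 x0 n s)| := by
        refine norm_int_le hx0 hx (by
          exact (continuous_const.mul (sppsEn_continuous x0 n)).add
            (continuous_const.mul (sppsZB_continuous x0 n))) ?_
        intro s hs
        calc ‖A1 s * X s + A2 s * Y s + P s * Z s‖
            ≤ ‖A1 s * X s‖ + ‖A2 s * Y s‖
              + ‖P s * Z s‖ :=
              le_trans (norm_add_le _ _)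
                (add_le_add_left (norm_add_le _ _) _)
          _ = ‖A1 s‖ * ‖X s‖ + ‖A2 s‖ * ‖Y s‖
              + ‖P s‖ * ‖Z s‖ := by
              rw [norm_mul, norm_mul, norm_mul]
          _ ≤ c3 * sppsEn c c1 c2 c3 x0 n s + c3 * sppsEn c c1 c2 c3 x0 n s
              + c2 * sppsZB c c1 c2 c3 x0 n s := by
              refine add_le_add (add_le_add ?_ ?_) ?_
              · exact mul_le_mul (hA1 s hs) ((ih s hs).1) (norm_nonneg _) hc3
              · exact mul_le_mul (hA2 s hs) ((ih s hs).2) (norm_nonneg _) hc3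
              · exact mul_le_mul (hP s hs) (hZb s hs) (norm_nonneg _) hc2
          _ = 2 * c3 * sppsEn c c1 c2 c3 x0 n s + c2 * sppsZB c c1 c2 c3 x0 n s := by ring
      calc ((n:ℝ)+1) * ‖∫ s in x0..x, (A1 s * X s + A2 s * Y s + P s * Z s)‖
          ≤ ((n:ℝ)+1) * |∫ s in x0..x,
              (2 * c3 * sppsEn c c1 c2 c3 x0 n s + c2 * sppsZB c c1 c2 c3 x0 n s)| := by
            have hn : (0:ℝ) ≤ (n:ℝ)+1 := by positivity
            exact mul_le_mul_of_nonneg_left h2 hn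
        _ = sppsEn c c1 c2 c3 x0 (n+1) x := step_integral_eq hc hc1 hc2 hc3 x0 x n
    intro x hx
    constructor
    · have hfst : (spps p1 p2 r11 r12 r21 r22 f g x0 X0 Y0 (n+1)).1 x
          = ((n:ℂ) + 1) * ∫ s in x0..x,
              ((-(r21 s)) * X s + (-(r22 s * (g s / f s))) * Y s + (p2 s / f s ^ 2) * Z s) := by
        show ((n:ℂ) + 1) * ∫ s in x0..x,
            (-(r21 s) * X s - r22 s * (g s / f s) * Y s + p2 s / f s ^ 2 * Z s) = _
        congr 1
        apply intervalIntegral.integral_congr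
        intro s _
        ring
      rw [hfst]
      exact step _ _ _ x hx
        (fun s hs => by simpa using hb3 s hs)
        (fun s hs => by simpa using hb3' s hs)
        (fun s hs => hb2 s hs)
    · have hsnd : (spps p1 p2 r11 r12 r21 r22 f g x0 X0 Y0 (n+1)).2 x
          = ((n:ℂ) + 1) * ∫ s in x0..x,
              ((r11 s * (f s / g s)) * X s + (r12 s) * Y s + (p1 s / g s ^ 2) * Z s) := by
        show ((n:ℂ) + 1) * ∫ s in x0..x,
            (r11 s * (f s / g s) * X s + r12 s * Y s + p1 s / g s ^ 2 * Z s) = _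
        rfl
      rw [hsnd]
      exact step _ _ _ x hx
        (fun s hs => hb3'' s hs)
        (fun s hs => hb3''' s hs)
        (fun s hs => hb2' s hs)

/-- the bound on the formal power Z -/
theorem sppsZ_bound (hx0 : x0 ∈ Icc a b)
    (hc : 0 ≤ c) (hc1 : 0 ≤ c1) (hc2 : 0 ≤ c2) (hc3 : 0 ≤ c3)
    (hX0c : ∀ x ∈ Icc a b, ‖X0 x‖ ≤ c)
    (hY0c : ∀ x ∈ Icc a b, ‖Y0 x‖ ≤ c)
    (hb1 : ∀ x ∈ Icc a b, ‖f x ^ 2 * r11 x + g x ^ 2 * r21 x‖ ≤ c1)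
    (hb1' : ∀ x ∈ Icc a b, ‖f x ^ 2 * r12 x + g x ^ 2 * r22 x‖ ≤ c1)
    (hb2 : ∀ x ∈ Icc a b, ‖p2 x / f x ^ 2‖ ≤ c2)
    (hb2' : ∀ x ∈ Icc a b, ‖p1 x / g x ^ 2‖ ≤ c2)
    (hb3 : ∀ x ∈ Icc a b, ‖r21 x‖ ≤ c3)
    (hb3' : ∀ x ∈ Icc a b, ‖r22 x * (g x / f x)‖ ≤ c3)
    (hb3'' : ∀ x ∈ Icc a b, ‖r11 x * (f x / g x)‖ ≤ c3)
    (hb3''' : ∀ x ∈ Icc a b, ‖r12 x‖ ≤ c3) :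
    ∀ n, ∀ x ∈ Icc a b,
      ‖sppsZ p1 p2 r11 r12 r21 r22 f g x0 X0 Y0 n x‖
        ≤ sppsZB c c1 c2 c3 x0 n x := by
  intro n x hx
  have ih := spps_bound hx0 hc hc1 hc2 hc3 hX0c hY0c hb1 hb1' hb2 hb2' hb3 hb3' hb3'' hb3''' n
  set X := (spps p1 p2 r11 r12 r21 r22 f g x0 X0 Y0 n).1 with hX
  set Y := (spps p1 p2 r11 r12 r21 r22 f g x0 X0 Y0 n).2 with hY
  have h1 : ‖∫ u in x0..x,
      (X u * (f u ^ 2 * r11 u + g u ^ 2 * r21 u)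
        + Y u * (f u ^ 2 * r12 u + g u ^ 2 * r22 u))‖
      ≤ |∫ u in x0..x, 2 * c1 * sppsEn c c1 c2 c3 x0 n u| := by
    refine norm_int_le hx0 hx (by
      exact continuous_const.mul (sppsEn_continuous x0 n)) ?_
    intro u hu
    calc ‖X u * (f u ^ 2 * r11 u + g u ^ 2 * r21 u)
          + Y u * (f u ^ 2 * r12 u + g u ^ 2 * r22 u)‖
        ≤ ‖X u‖ * ‖f u ^ 2 * r11 u + g u ^ 2 * r21 u‖
          + ‖Y u‖ * ‖f u ^ 2 * r12 u + g u ^ 2 * r22 u‖ := by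
          refine le_trans (norm_add_le _ _) ?_
          rw [norm_mul, norm_mul]
      _ ≤ sppsEn c c1 c2 c3 x0 n u * c1 + sppsEn c c1 c2 c3 x0 n u * c1 := by
          refine add_le_add ?_ ?_
          · exact mul_le_mul (ih u hu).1 (hb1 u hu) (norm_nonneg _)
              (sppsEn_nonneg hc hc1 hc2 hc3 x0 n u)
          · exact mul_le_mul (ih u hu).2 (hb1' u hu) (norm_nonneg _)
              (sppsEn_nonneg hc hc1 hc2 hc3 x0 n u)
      _ = 2 * c1 * sppsEn c c1 c2 c3 x0 n u := by ring
  calc ‖sppsZ p1 p2 r11 r12 r21 r22 f g x0 X0 Y0 n x‖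
      ≤ |∫ u in x0..x, 2 * c1 * sppsEn c c1 c2 c3 x0 n u| := h1
    _ = sppsZB c c1 c2 c3 x0 n x := by
        rw [intervalIntegral.integral_const_mul, abs_mul, abs_of_nonneg (by positivity)]
        rw [← abs_integral_sppsEn hc hc1 hc2 hc3 x0 x n]

end main

lemma supNorm_nonneg (a b : ℝ) (h : ℝ → ℂ) : 0 ≤ supNorm a b h :=
  Real.sSup_nonneg fun y hy => by
    obtain ⟨x, -, rfl⟩ := hy
    exact norm_nonneg _

lemma le_supNorm {a b : ℝ} {h : ℝ → ℂ} (hcont : ContinuousOn h (Icc a b))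
    {x : ℝ} (hx : x ∈ Icc a b) : ‖h x‖ ≤ supNorm a b h := by
  refine le_csSup ?_ ⟨x, hx, rfl⟩
  exact (isCompact_Icc.image_of_continuousOn
    (continuous_norm.comp_continuousOn hcont)).bddAbove

lemma cont_primitive {a b x0 : ℝ} (hab : a ≤ b) (hx0 : x0 ∈ Icc a b) {F : ℝ → ℂ}
    (hF : ContinuousOn F (Icc a b)) :
    ContinuousOn (fun x => ∫ s in x0..x, F s) (Icc a b) := by
  have h1 : IntervalIntegrable F volume a b :=
    (by rwa [uIcc_of_le hab] : ContinuousOn F (uIcc a b)).intervalIntegrable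
  have h2 := intervalIntegral.continuousOn_primitive_interval' h1 (by rwa [uIcc_of_le hab])
  rwa [uIcc_of_le hab] at h2

/-- the estimate for the formal powers Z⁽ⁿ⁾, Z̃⁽ⁿ⁾. -/
theorem spps_Z_estimate (a b x0 : ℝ) (hab : a ≤ b) (hx0 : x0 ∈ Icc a b)
    (p1 p2 q r11 r12 r21 r22 f g : ℝ → ℂ)
    (hp1 : ContinuousOn p1 (Icc a b)) (hp2 : ContinuousOn p2 (Icc a b))
    (hq : ContinuousOn q (Icc a b))
    (hr11 : ContinuousOn r11 (Icc a b)) (hr12 : ContinuousOn r12 (Icc a b))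
    (hr21 : ContinuousOn r21 (Icc a b)) (hr22 : ContinuousOn r22 (Icc a b))
    (hf : ∀ x ∈ Icc a b, f x ≠ 0) (hg : ∀ x ∈ Icc a b, g x ≠ 0)
    (hsys : ∀ x ∈ Icc a b,
      HasDerivWithinAt g (-(p1 x * f x) - q x * g x) (Icc a b) x ∧
      HasDerivWithinAt f (q x * f x + p2 x * g x) (Icc a b) x)
    (S St : ℕ → (ℝ → ℂ) × (ℝ → ℂ))
    (hS : S = spps p1 p2 r11 r12 r21 r22 f g x0 (sppsX0 p2 f g x0) (sppsY0 p1 f g x0))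
    (hSt : St = spps p1 p2 r11 r12 r21 r22 f g x0 (sppsXt0 p2 f g x0) (sppsYt0 p1 f g x0))
    (c c1 c2 c3 : ℝ)
    (hc : c = max (max (supNorm a b (sppsX0 p2 f g x0)) (supNorm a b (sppsY0 p1 f g x0)))
      (max (supNorm a b (sppsXt0 p2 f g x0)) (supNorm a b (sppsYt0 p1 f g x0))))
    (hc1 : c1 = max (supNorm a b (fun x => f x ^ 2 * r11 x + g x ^ 2 * r21 x))
      (supNorm a b (fun x => f x ^ 2 * r12 x + g x ^ 2 * r22 x)))
    (hc2 : c2 = max (supNorm a b (fun x => p1 x / g x ^ 2))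
      (supNorm a b (fun x => p2 x / f x ^ 2)))
    (hc3 : c3 = max (max (supNorm a b (fun x => r11 x * f x / g x)) (supNorm a b r12))
      (max (supNorm a b r21) (supNorm a b (fun x => r22 x * g x / f x)))) :
    ∀ n : ℕ, ∀ x ∈ Icc a b,
      max (‖sppsZ p1 p2 r11 r12 r21 r22 f g x0 (sppsX0 p2 f g x0) (sppsY0 p1 f g x0) n x‖)
          (‖sppsZ p1 p2 r11 r12 r21 r22 f g x0 (sppsXt0 p2 f g x0) (sppsYt0 p1 f g x0) n x‖)
        ≤ c * c1 * 2 ^ (n + 1) * (n.factorial : ℝ) * ∑ k ∈ Finset.range (n + 1),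
            (n.choose k : ℝ) * (c1 * c2) ^ k * c3 ^ (n - k) * |x - x0| ^ (n + k + 1)
              / ((n + k + 1).factorial : ℝ) := by
  intro n x hx
  have hfc : ContinuousOn f (Icc a b) := fun y hy => ((hsys y hy).2).continuousWithinAt
  have hgc : ContinuousOn g (Icc a b) := fun y hy => ((hsys y hy).1).continuousWithinAt
  have hf2 : ∀ y ∈ Icc a b, f y ^ 2 ≠ 0 := fun y hy => pow_ne_zero _ (hf y hy)
  have hg2 : ∀ y ∈ Icc a b, g y ^ 2 ≠ 0 := fun y hy => pow_ne_zero _ (hg y hy)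
  have hc0 : 0 ≤ c := by
    rw [hc]
    exact le_trans (supNorm_nonneg a b _) (le_trans (le_max_left _ _) (le_max_left _ _))
  have hc10 : 0 ≤ c1 := by
    rw [hc1]; exact le_trans (supNorm_nonneg a b _) (le_max_left _ _)
  have hc20 : 0 ≤ c2 := by
    rw [hc2]; exact le_trans (supNorm_nonneg a b _) (le_max_left _ _)
  have hc30 : 0 ≤ c3 := by
    rw [hc3]
    exact le_trans (supNorm_nonneg a b _) (le_trans (le_max_left _ _) (le_max_left _ _))
  have hA1c : ContinuousOn (fun y => f y ^ 2 * r11 y + g y ^ 2 * r21 y) (Icc a b) :=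
    ((hfc.pow 2).mul hr11).add ((hgc.pow 2).mul hr21)
  have hA2c : ContinuousOn (fun y => f y ^ 2 * r12 y + g y ^ 2 * r22 y) (Icc a b) :=
    ((hfc.pow 2).mul hr12).add ((hgc.pow 2).mul hr22)
  have hP2c : ContinuousOn (fun y => p2 y / f y ^ 2) (Icc a b) := hp2.div (hfc.pow 2) hf2
  have hP1c : ContinuousOn (fun y => p1 y / g y ^ 2) (Icc a b) := hp1.div (hgc.pow 2) hg2
  have hRfg : ContinuousOn (fun y => r11 y * f y / g y) (Icc a b) := (hr11.mul hfc).div hgc hg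
  have hRgf : ContinuousOn (fun y => r22 y * g y / f y) (Icc a b) := (hr22.mul hgc).div hfc hf
  have hb1 : ∀ y ∈ Icc a b, ‖f y ^ 2 * r11 y + g y ^ 2 * r21 y‖ ≤ c1 :=
    fun y hy => le_trans (le_supNorm hA1c hy) (by rw [hc1]; exact le_max_left _ _)
  have hb1' : ∀ y ∈ Icc a b, ‖f y ^ 2 * r12 y + g y ^ 2 * r22 y‖ ≤ c1 :=
    fun y hy => le_trans (le_supNorm hA2c hy) (by rw [hc1]; exact le_max_right _ _)
  have hb2 : ∀ y ∈ Icc a b, ‖p2 y / f y ^ 2‖ ≤ c2 :=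
    fun y hy => le_trans (le_supNorm hP2c hy) (by rw [hc2]; exact le_max_right _ _)
  have hb2' : ∀ y ∈ Icc a b, ‖p1 y / g y ^ 2‖ ≤ c2 :=
    fun y hy => le_trans (le_supNorm hP1c hy) (by rw [hc2]; exact le_max_left _ _)
  have hb3 : ∀ y ∈ Icc a b, ‖r21 y‖ ≤ c3 :=
    fun y hy => le_trans (le_supNorm hr21 hy)
      (by rw [hc3]; exact le_trans (le_max_left _ _) (le_max_right _ _))
  have hb3' : ∀ y ∈ Icc a b, ‖r22 y * (g y / f y)‖ ≤ c3 := fun y hy => by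
    rw [← mul_div_assoc]
    exact le_trans (le_supNorm hRgf hy)
      (by rw [hc3]; exact le_trans (le_max_right _ _) (le_max_right _ _))
  have hb3'' : ∀ y ∈ Icc a b, ‖r11 y * (f y / g y)‖ ≤ c3 := fun y hy => by
    rw [← mul_div_assoc]
    exact le_trans (le_supNorm hRfg hy)
      (by rw [hc3]; exact le_trans (le_max_left _ _) (le_max_left _ _))
  have hb3''' : ∀ y ∈ Icc a b, ‖r12 y‖ ≤ c3 :=
    fun y hy => le_trans (le_supNorm hr12 hy)
      (by rw [hc3]; exact le_trans (le_max_right _ _) (le_max_left _ _))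
  have hX0cont : ContinuousOn (sppsX0 p2 f g x0) (Icc a b) := by
    unfold sppsX0; exact continuousOn_const.mul (cont_primitive hab hx0 hP2c)
  have hY0cont : ContinuousOn (sppsY0 p1 f g x0) (Icc a b) := by
    unfold sppsY0
    exact continuousOn_const.add (continuousOn_const.mul (cont_primitive hab hx0 hP1c))
  have hXt0cont : ContinuousOn (sppsXt0 p2 f g x0) (Icc a b) := by
    unfold sppsXt0
    exact continuousOn_const.sub (continuousOn_const.mul (cont_primitive hab hx0 hP2c))
  have hYt0cont : ContinuousOn (sppsYt0 p1 f g x0) (Icc a b) := by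
    unfold sppsYt0; exact continuousOn_const.mul (cont_primitive hab hx0 hP1c)
  have hX0c : ∀ y ∈ Icc a b, ‖sppsX0 p2 f g x0 y‖ ≤ c :=
    fun y hy => le_trans (le_supNorm hX0cont hy)
      (by rw [hc]; exact le_trans (le_max_left _ _) (le_max_left _ _))
  have hY0c : ∀ y ∈ Icc a b, ‖sppsY0 p1 f g x0 y‖ ≤ c :=
    fun y hy => le_trans (le_supNorm hY0cont hy)
      (by rw [hc]; exact le_trans (le_max_right _ _) (le_max_left _ _))
  have hXt0c : ∀ y ∈ Icc a b, ‖sppsXt0 p2 f g x0 y‖ ≤ c :=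
    fun y hy => le_trans (le_supNorm hXt0cont hy)
      (by rw [hc]; exact le_trans (le_max_left _ _) (le_max_right _ _))
  have hYt0c : ∀ y ∈ Icc a b, ‖sppsYt0 p1 f g x0 y‖ ≤ c :=
    fun y hy => le_trans (le_supNorm hYt0cont hy)
      (by rw [hc]; exact le_trans (le_max_right _ _) (le_max_right _ _))
  have hZ1 := sppsZ_bound hx0 hc0 hc10 hc20 hc30 hX0c hY0c hb1 hb1' hb2 hb2'
    hb3 hb3' hb3'' hb3''' n x hx
  have hZ2 := sppsZ_bound hx0 hc0 hc10 hc20 hc30 hXt0c hYt0c hb1 hb1' hb2 hb2'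
    hb3 hb3' hb3'' hb3''' n x hx
  have hRHS : sppsZB c c1 c2 c3 x0 n x
      = c * c1 * 2 ^ (n + 1) * (n.factorial : ℝ) * ∑ k ∈ Finset.range (n + 1),
          (n.choose k : ℝ) * (c1 * c2) ^ k * c3 ^ (n - k) * |x - x0| ^ (n + k + 1)
            / ((n + k + 1).factorial : ℝ) := by
    unfold sppsZB coB
    rw [Finset.mul_sum]
    exact Finset.sum_congr rfl fun k _ => by ring
  rw [← hRHS]
  exact max_le hZ1 hZ2
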